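/- Suppose there exists an IGDD((g;h)^u, K) and an IPBD((x;y),K) with g - h = x - y and y ≥ h. Then there exists an IPBD((v;w),K) with v - w = u(x-y) and w = (u-1)h + y. -/

import Mathlib

/-- Existence of an incomplete pairwise balanced design IPBD((v;w),K). -/
def IsIPBD (v w : ℕ) (K : Finset ℕ) : Prop :=
  ∃ (W : Finset (Fin v)) (B : Finset (Finset (Fin v))),
    W.card = w ∧
    (∀ b ∈ B, b.card ∈ K) ∧
    (∀ b ∈ B, ∀ x ∈ W, ∀ y ∈ W, x ∈ b → y ∈ b → x = y) ∧
    (∀ x y : Fin v, x ≠ y → ¬(x ∈ W ∧ y ∈ W) →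
      ∃! b, b ∈ B ∧ x ∈ b ∧ y ∈ b)

/-- Covered pairs of an IGDD((g;h)^u,K) on `Fin u × Fin g` with hole points
those whose second coordinate is < h. -/
def igddCovered (u g h : ℕ) (x y : Fin u × Fin g) : Prop :=
  x.1 ≠ y.1 ∧ ¬((x.2 : ℕ) < h ∧ (y.2 : ℕ) < h)

/-- Existence of an IGDD((g;h)^u,K). -/
def IsIGDD (g h u : ℕ) (K : Finset ℕ) : Prop :=
  ∃ B : Finset (Finset (Fin u × Fin g)),
    (∀ b ∈ B, b.card ∈ K) ∧
    (∀ x y : Fin u × Fin g, igddCovered u g h x y →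
      ∃! b, b ∈ B ∧ x ∈ b ∧ y ∈ b) ∧
    (∀ x y : Fin u × Fin g, x ≠ y → ¬ igddCovered u g h x y →
      ∀ b ∈ B, ¬(x ∈ b ∧ y ∈ b))

/-- Transfer an IPBD-like structure along an equivalence to `Fin v`. -/
lemma isIPBD_transfer {α : Type} [Fintype α] [DecidableEq α] {v w : ℕ} {K : Finset ℕ}
    (E : α ≃ Fin v) (W : Finset α) (B : Finset (Finset α))
    (hW : W.card = w)
    (hsz : ∀ b ∈ B, b.card ∈ K)
    (hmeet : ∀ b ∈ B, ∀ p ∈ W, ∀ q ∈ W, p ∈ b → q ∈ b → p = q)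
    (hcov : ∀ p q : α, p ≠ q → ¬(p ∈ W ∧ q ∈ W) →
      ∃! b, b ∈ B ∧ p ∈ b ∧ q ∈ b) : IsIPBD v w K := by
  classical
  refine ⟨W.map E.toEmbedding, B.image (Finset.map E.toEmbedding), ?_, ?_, ?_, ?_⟩
  · simp [hW]
  · intro b hb
    simp only [Finset.mem_image] at hb
    obtain ⟨c, hc, rfl⟩ := hb
    simpa using hsz c hc
  · intro b hb p hp q hq hpb hqb
    simp only [Finset.mem_image] at hb
    obtain ⟨c, hc, rfl⟩ := hb
    rw [Finset.mem_map_equiv] at hp hq hpb hqb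
    have := hmeet c hc _ hp _ hq hpb hqb
    have := congrArg E this
    simpa using this
  · intro p q hpq hW'
    have hne : E.symm p ≠ E.symm q := fun hc => hpq (by simpa using congrArg E hc)
    have hnW : ¬(E.symm p ∈ W ∧ E.symm q ∈ W) := by
      intro hc
      exact hW' ⟨by simpa [Finset.mem_map_equiv] using hc.1,
        by simpa [Finset.mem_map_equiv] using hc.2⟩
    obtain ⟨c, ⟨hc, hpc, hqc⟩, huniq⟩ := hcov _ _ hne hnW
    refine ⟨c.map E.toEmbedding, ⟨Finset.mem_image_of_mem _ hc, ?_, ?_⟩, ?_⟩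
    · rw [Finset.mem_map_equiv]; exact hpc
    · rw [Finset.mem_map_equiv]; exact hqc
    · rintro b ⟨hb, hpb, hqb⟩
      simp only [Finset.mem_image] at hb
      obtain ⟨c', hc', rfl⟩ := hb
      rw [Finset.mem_map_equiv] at hpb hqb
      rw [huniq c' ⟨hc', hpb, hqb⟩]

theorem igdd_fill_ipbd
    (g h u x y : ℕ) (hhg : h ≤ g) (hyx : y ≤ x) (hhy : h ≤ y)
    (hdiff : g - h = x - y)
    (K : Finset ℕ) (hK : ∀ k ∈ K, 2 ≤ k)
    (higdd : IsIGDD g h u K) (hipbd : IsIPBD x y K) :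
    IsIPBD (u * (x - y) + ((u - 1) * h + y)) ((u - 1) * h + y) K := by
  classical
  -- eliminate subtractions
  obtain ⟨d, rfl⟩ : ∃ d, g = h + d := ⟨g - h, by omega⟩
  obtain ⟨ey, rfl⟩ : ∃ ey, y = h + ey := ⟨y - h, by omega⟩
  obtain rfl : x = h + ey + d := by omega
  rcases Nat.eq_zero_or_pos u with rfl | hu
  · -- trivial case u = 0
    simp only [Nat.zero_mul, Nat.zero_sub, Nat.zero_add]
    refine ⟨Finset.univ, ∅, ?_, by simp, by simp, ?_⟩
    · simp
    · intro p q hpq hW; exact absurd ⟨Finset.mem_univ p, Finset.mem_univ q⟩ hW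
  obtain ⟨u', rfl⟩ : ∃ u', u = u' + 1 := ⟨u - 1, by omega⟩
  simp only [show h + ey + d - (h + ey) = d from by omega,
    show u' + 1 - 1 = u' from rfl]
  -- notation
  set X := h + ey + d with hX
  obtain ⟨B₀, hB₀sz, hB₀cov, hB₀non⟩ := higdd
  obtain ⟨W₁, B₁, hW₁card, hB₁sz, hB₁meet, hB₁cov⟩ := hipbd
  -- the equivalence e : Fin X ≃ Fin (h+d) ⊕ Fin ey
  have hWc : W₁.card = h + ey := hW₁card
  have hCc : (W₁ᶜ).card = d := by
    rw [Finset.card_compl, hWc]; simp [X]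
  let ew : {p : Fin X // p ∈ W₁} ≃ Fin (h + ey) := W₁.equivFin.trans (finCongr hWc)
  let ec : {p : Fin X // ¬ p ∈ W₁} ≃ Fin d :=
    (Equiv.subtypeEquivRight (fun p => (Finset.mem_compl (s := W₁)).symm)).trans
      ((W₁ᶜ).equivFin.trans (finCongr hCc))
  let swap3 : (Fin h ⊕ Fin ey) ⊕ Fin d ≃ (Fin h ⊕ Fin d) ⊕ Fin ey :=
    (Equiv.sumAssoc _ _ _).trans
      (((Equiv.refl (Fin h)).sumCongr (Equiv.sumComm (Fin ey) (Fin d))).trans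
        (Equiv.sumAssoc _ _ _).symm)
  let e : Fin X ≃ Fin (h + d) ⊕ Fin ey :=
    (Equiv.sumCompl (· ∈ W₁)).symm.trans
      ((Equiv.sumCongr (ew.trans finSumFinEquiv.symm) ec).trans
        (swap3.trans (Equiv.sumCongr finSumFinEquiv (Equiv.refl (Fin ey)))))
  -- key property of e
  have hE : ∀ p : Fin X,
      (∀ j : Fin (h + d), e p = Sum.inl j → ((j : ℕ) < h ↔ p ∈ W₁)) ∧
      (∀ q : Fin ey, e p = Sum.inr q → p ∈ W₁) := by
    intro p
    by_cases hp : p ∈ W₁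
    · have h0 : (Equiv.sumCompl (· ∈ W₁)).symm p = Sum.inl ⟨p, hp⟩ := by
        rw [Equiv.symm_apply_eq]; simp
      have : e p = (swap3.trans (Equiv.sumCongr finSumFinEquiv (Equiv.refl (Fin ey))))
          (Sum.inl (finSumFinEquiv.symm (ew ⟨p, hp⟩))) := by
        simp [e, h0]
      rcases hs : finSumFinEquiv.symm (ew ⟨p, hp⟩) with a | b
      · rw [hs] at this
        have : e p = Sum.inl (finSumFinEquiv (Sum.inl a)) := by
          simpa [swap3, Equiv.sumAssoc] using this
        constructor
        · intro j hj
          rw [this] at hj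
          injection hj with hj
          subst hj
          simp [finSumFinEquiv_apply_left, hp, a.isLt]
        · intro q hq; rw [this] at hq; exact absurd hq (by simp)
      · rw [hs] at this
        have : e p = Sum.inr b := by
          simpa [swap3, Equiv.sumAssoc] using this
        constructor
        · intro j hj; rw [this] at hj; exact absurd hj (by simp)
        · intro q hq; exact hp
    · have h0 : (Equiv.sumCompl (· ∈ W₁)).symm p = Sum.inr ⟨p, hp⟩ := by
        rw [Equiv.symm_apply_eq]; simp
      have : e p = Sum.inl (finSumFinEquiv (Sum.inr (ec ⟨p, hp⟩))) := by
        simp [e, h0, swap3, Equiv.sumAssoc]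
      constructor
      · intro j hj
        rw [this] at hj
        injection hj with hj
        subst hj
        simp only [finSumFinEquiv_apply_right, Fin.coe_natAdd]
        constructor
        · omega
        · intro hc; exact absurd hc hp
      · intro q hq; rw [this] at hq; exact absurd hq (by simp)
  -- the ambient type
  set α := (Fin (u' + 1) × Fin (h + d)) ⊕ Fin ey with hα
  let Hp : α → Prop := fun a => Sum.elim (fun z => (z.2 : ℕ) < h) (fun _ => True) a
  let W : Finset α := Finset.univ.filter Hp
  have hWmem : ∀ a : α, a ∈ W ↔ Hp a := by intro a; simp [W]
  -- embeddings
  have hinl : Function.Injective (Sum.inl : Fin (u' + 1) × Fin (h + d) → α) :=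
    Sum.inl_injective
  let inlE : Fin (u' + 1) × Fin (h + d) ↪ α := ⟨Sum.inl, hinl⟩
  let f : Fin (u' + 1) → (Fin X ↪ α) := fun i =>
    ⟨fun p => Sum.map (fun j => (i, j)) id (e p),
     (Function.Injective.sumMap (fun a b hab => congrArg Prod.snd hab)
        (fun a b hab => hab)).comp e.injective⟩
  -- facts about f
  have hfA : ∀ i p z, f i p = Sum.inl z → z.1 = i := by
    intro i p z hz
    rcases he : e p with j | q
    · simp only [f, Function.Embedding.coeFn_mk, he, Sum.map_inl] at hz
      injection hz with hz; rw [← hz]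
    · simp only [f, Function.Embedding.coeFn_mk, he, Sum.map_inr] at hz
      exact absurd hz (by simp)
  have hfB : ∀ i p, f i p ∈ W ↔ p ∈ W₁ := by
    intro i p
    rcases he : e p with j | q
    · have : f i p = Sum.inl (i, j) := by
        simp [f, he]
      rw [this, hWmem]
      simpa [Hp] using (hE p).1 j he
    · have : f i p = Sum.inr q := by simp [f, he]
      rw [this, hWmem]
      simp only [Hp, Sum.elim_inr, true_iff]
      exact (hE p).2 q he
  have hfD : ∀ i p q, f i p = Sum.inr q → p ∈ W₁ := by
    intro i p q hq
    rcases he : e p with j | q'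
    · simp only [f, Function.Embedding.coeFn_mk, he, Sum.map_inl] at hq
      exact absurd hq (by simp)
    · exact (hE p).2 q' he
  have hfC1 : ∀ i (j : Fin (h + d)), f i (e.symm (Sum.inl j)) = Sum.inl (i, j) := by
    intro i j; simp [f]
  have hfC2 : ∀ i (q : Fin ey), f i (e.symm (Sum.inr q)) = Sum.inr q := by
    intro i q; simp [f]
  -- the block set
  let B : Finset (Finset α) :=
    B₀.image (Finset.map inlE) ∪
      Finset.univ.biUnion (fun i => B₁.image (Finset.map (f i)))
  have hBmem : ∀ b, b ∈ B ↔
      ((∃ c ∈ B₀, b = c.map inlE) ∨ ∃ i, ∃ c ∈ B₁, b = c.map (f i)) := by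
    intro b
    simp only [B, Finset.mem_union, Finset.mem_image, Finset.mem_biUnion,
      Finset.mem_univ, true_and]
    constructor
    · rintro (⟨c, hc, rfl⟩ | ⟨i, c, hc, rfl⟩)
      · exact Or.inl ⟨c, hc, rfl⟩
      · exact Or.inr ⟨i, c, hc, rfl⟩
    · rintro (⟨c, hc, rfl⟩ | ⟨i, c, hc, rfl⟩)
      · exact Or.inl ⟨c, hc, rfl⟩
      · exact Or.inr ⟨i, c, hc, rfl⟩
  -- fill coverage
  have fillCover : ∀ (i : Fin (u' + 1)) (p q : Fin X), p ≠ q → ¬(p ∈ W₁ ∧ q ∈ W₁) →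
      ∃! b, b ∈ B ∧ f i p ∈ b ∧ f i q ∈ b := by
    intro i p q hpq hnW
    obtain ⟨c, ⟨hc, hpc, hqc⟩, huniq⟩ := hB₁cov p q hpq hnW
    refine ⟨c.map (f i), ⟨(hBmem _).2 (Or.inr ⟨i, c, hc, rfl⟩),
      Finset.mem_map_of_mem _ hpc, Finset.mem_map_of_mem _ hqc⟩, ?_⟩
    rintro b ⟨hb, hpb, hqb⟩
    rcases (hBmem b).1 hb with ⟨c', hc', rfl⟩ | ⟨i', c', hc', rfl⟩
    · -- IGDD block cannot contain this pair
      exfalso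
      rw [Finset.mem_map] at hpb hqb
      obtain ⟨zp, hzp, hzpe⟩ := hpb
      obtain ⟨zq, hzq, hzqe⟩ := hqb
      -- f i p = inl zp, f i q = inl zq
      have hzp1 : zp.1 = i := hfA i p zp hzpe.symm
      have hzq1 : zq.1 = i := hfA i q zq hzqe.symm
      have hne : zp ≠ zq := by
        intro hc0
        apply hpq
        apply (f i).injective
        rw [← hzpe, ← hzqe, hc0]
      exact hB₀non zp zq hne (by
        intro hcov; exact hcov.1 (hzp1.trans hzq1.symm)) c' hc' ⟨hzp, hzq⟩
    · -- another fill
      have hi : i' = i := by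
        -- at least one of f i p, f i q is a Sum.inl
        rcases hfp : f i p with zp | qp
        · rw [Finset.mem_map] at hpb
          obtain ⟨r, hr, hre⟩ := hpb
          have h1 : zp.1 = i' := hfA i' r zp (hre.trans hfp)
          have h2 : zp.1 = i := hfA i p zp hfp
          rw [← h1, h2]
        · rcases hfq : f i q with zq | qq
          · rw [Finset.mem_map] at hqb
            obtain ⟨r, hr, hre⟩ := hqb
            have h1 : zq.1 = i' := hfA i' r zq (hre.trans hfq)
            have h2 : zq.1 = i := hfA i q zq hfq
            rw [← h1, h2]
          · exact absurd ⟨hfD i p qp hfp, hfD i q qq hfq⟩ hnW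
      subst hi
      rw [Finset.mem_map] at hpb hqb
      obtain ⟨rp, hrp, hrpe⟩ := hpb
      obtain ⟨rq, hrq, hrqe⟩ := hqb
      have hrp' : rp = p := (f i').injective hrpe
      have hrq' : rq = q := (f i').injective hrqe
      subst hrp'; subst hrq'
      rw [huniq c' ⟨hc', hrp, hrq⟩]
  -- main coverage on α
  have cover : ∀ a b : α, a ≠ b → ¬(a ∈ W ∧ b ∈ W) →
      ∃! blk, blk ∈ B ∧ a ∈ blk ∧ b ∈ blk := by
    intro a b hab hnW
    rcases a with ⟨ia, ja⟩ | qa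
    · rcases b with ⟨ib, jb⟩ | qb
      · by_cases hij : ia = ib
        · -- same group: use the fill of group ia
          subst hij
          have hjj : ja ≠ jb := fun hc => hab (by rw [hc])
          have hfp := hfC1 ia ja
          have hfq := hfC1 ia jb
          have hpq : e.symm (Sum.inl ja) ≠ e.symm (Sum.inl jb) := by
            intro hc
            exact hjj (Sum.inl_injective (e.symm.injective hc))
          have hnW' : ¬(e.symm (Sum.inl ja) ∈ W₁ ∧ e.symm (Sum.inl jb) ∈ W₁) := by
            rintro ⟨h1, h2⟩
            refine hnW ⟨?_, ?_⟩
            · rw [← hfp]; exact (hfB ia _).2 h1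
            · rw [← hfq]; exact (hfB ia _).2 h2
          rw [← hfp, ← hfq]
          exact fillCover ia _ _ hpq hnW'
        · -- distinct groups: use the IGDD
          have hcov : igddCovered (u' + 1) (h + d) h (ia, ja) (ib, jb) := by
            refine ⟨hij, ?_⟩
            intro hc
            exact hnW ⟨(hWmem _).2 (by simpa [Hp] using hc.1),
              (hWmem _).2 (by simpa [Hp] using hc.2)⟩
          obtain ⟨c, ⟨hc, hic, hjc⟩, huq⟩ := hB₀cov _ _ hcov
          refine ⟨c.map inlE, ⟨(hBmem _).2 (Or.inl ⟨c, hc, rfl⟩),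
            Finset.mem_map_of_mem _ hic, Finset.mem_map_of_mem _ hjc⟩, ?_⟩
          rintro blk ⟨hblk, hpb, hqb⟩
          rcases (hBmem blk).1 hblk with ⟨c', hc', rfl⟩ | ⟨i0, c', hc', rfl⟩
          · rw [Finset.mem_map] at hpb hqb
            obtain ⟨zp, hzp, hzpe⟩ := hpb
            obtain ⟨zq, hzq, hzqe⟩ := hqb
            have h1 : zp = (ia, ja) := Sum.inl_injective hzpe
            have h2 : zq = (ib, jb) := Sum.inl_injective hzqe
            subst h1; subst h2
            rw [huq c' ⟨hc', hzp, hzq⟩]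
          · exfalso
            rw [Finset.mem_map] at hpb hqb
            obtain ⟨rp, _, hrpe⟩ := hpb
            obtain ⟨rq, _, hrqe⟩ := hqb
            have h1 : (ia, ja).1 = i0 := hfA i0 rp _ hrpe
            have h2 : (ib, jb).1 = i0 := hfA i0 rq _ hrqe
            exact hij (h1.trans h2.symm)
      · -- group point with extra point: use the fill of group ia
        have hfp := hfC1 ia ja
        have hfq := hfC2 ia qb
        have hpq : e.symm (Sum.inl ja) ≠ e.symm (Sum.inr qb) := by
          intro hc
          exact absurd (e.symm.injective hc) (by simp)
        have hnW' : ¬(e.symm (Sum.inl ja) ∈ W₁ ∧ e.symm (Sum.inr qb) ∈ W₁) := by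
          rintro ⟨h1, h2⟩
          refine hnW ⟨?_, (hWmem _).2 trivial⟩
          rw [← hfp]; exact (hfB ia _).2 h1
        rw [← hfp, ← hfq]
        exact fillCover ia _ _ hpq hnW'
    · rcases b with ⟨ib, jb⟩ | qb
      · -- extra point with group point
        have hfp := hfC2 ib qa
        have hfq := hfC1 ib jb
        have hpq : e.symm (Sum.inr qa) ≠ e.symm (Sum.inl jb) := by
          intro hc
          exact absurd (e.symm.injective hc) (by simp)
        have hnW' : ¬(e.symm (Sum.inr qa) ∈ W₁ ∧ e.symm (Sum.inl jb) ∈ W₁) := by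
          rintro ⟨h1, h2⟩
          refine hnW ⟨(hWmem _).2 trivial, ?_⟩
          rw [← hfq]; exact (hfB ib _).2 h2
        rw [← hfp, ← hfq]
        exact fillCover ib _ _ hpq hnW'
      · -- two extra points: both in the hole
        exact absurd ⟨(hWmem _).2 trivial, (hWmem _).2 trivial⟩ hnW
  -- card of W
  have hfilter : (Finset.univ.filter (fun j : Fin (h + d) => (j : ℕ) < h)).card = h := by
    apply Finset.card_eq_of_bijective (fun k hk => (⟨k, by omega⟩ : Fin (h + d)))
    · intro a ha
      rw [Finset.mem_filter] at ha
      exact ⟨(a : ℕ), ha.2, Fin.ext rfl⟩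
    · intro k hk
      simp [Finset.mem_filter, hk]
    · intro a b ha hb hab
      simpa using congrArg Fin.val hab
  have hWcard : W.card = u' * h + (h + ey) := by
    have hdecomp : W = ((Finset.univ ×ˢ
          (Finset.univ.filter fun j : Fin (h + d) => (j : ℕ) < h)).map inlE) ∪
        (Finset.univ.map ⟨Sum.inr, Sum.inr_injective⟩) := by
      ext a
      rcases a with ⟨i, j⟩ | q
      · simp only [hWmem, Hp, Sum.elim_inl, Finset.mem_union, Finset.mem_map,
          Function.Embedding.coeFn_mk, inlE]
        constructor
        · intro hj
          exact Or.inl ⟨(i, j), Finset.mem_product.2 ⟨Finset.mem_univ _,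
            Finset.mem_filter.2 ⟨Finset.mem_univ _, hj⟩⟩, rfl⟩
        · rintro (⟨⟨a, b⟩, hmem, hab⟩ | ⟨q, -, hq⟩)
          · have hb : (b : ℕ) < h :=
              (Finset.mem_filter.1 (Finset.mem_product.1 hmem).2).2
            have h2 : b = j := congrArg Prod.snd (Sum.inl_injective hab)
            exact h2 ▸ hb
          · exact absurd hq (by simp)
      · simp only [hWmem, Hp, Sum.elim_inr, Finset.mem_union, Finset.mem_map,
          Function.Embedding.coeFn_mk, inlE, true_iff]
        exact Or.inr ⟨q, Finset.mem_univ q, rfl⟩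
    have hdisj : Disjoint ((Finset.univ ×ˢ
          (Finset.univ.filter fun j : Fin (h + d) => (j : ℕ) < h)).map inlE)
        ((Finset.univ.map ⟨Sum.inr, Sum.inr_injective⟩ : Finset α)) := by
      rw [Finset.disjoint_left]
      intro a ha hb
      rw [Finset.mem_map] at ha hb
      obtain ⟨z, -, rfl⟩ := ha
      obtain ⟨q, -, hq⟩ := hb
      exact absurd hq (by simp [inlE])
    rw [hdecomp, Finset.card_union_of_disjoint hdisj, Finset.card_map,
      Finset.card_map, Finset.card_product, hfilter, Finset.card_univ,
      Finset.card_univ, Fintype.card_fin, Fintype.card_fin]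
    ring
  -- block sizes
  have hsz : ∀ b ∈ B, b.card ∈ K := by
    intro b hb
    rcases (hBmem b).1 hb with ⟨c, hc, rfl⟩ | ⟨i, c, hc, rfl⟩
    · rw [Finset.card_map]; exact hB₀sz c hc
    · rw [Finset.card_map]; exact hB₁sz c hc
  -- blocks meet W in at most one point
  have hmeet : ∀ b ∈ B, ∀ p ∈ W, ∀ q ∈ W, p ∈ b → q ∈ b → p = q := by
    intro b hb p hp q hq hpb hqb
    rcases (hBmem b).1 hb with ⟨c, hc, rfl⟩ | ⟨i, c, hc, rfl⟩
    · rw [Finset.mem_map] at hpb hqb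
      obtain ⟨zp, hzp, hzpe⟩ := hpb
      obtain ⟨zq, hzq, hzqe⟩ := hqb
      subst hzpe; subst hzqe
      by_contra hne
      have hne' : zp ≠ zq := fun hc0 => hne (by rw [hc0])
      refine hB₀non zp zq hne' ?_ c hc ⟨hzp, hzq⟩
      intro hcov
      rw [hWmem] at hp hq
      exact hcov.2 ⟨by simpa [Hp, inlE] using hp, by simpa [Hp, inlE] using hq⟩
    · rw [Finset.mem_map] at hpb hqb
      obtain ⟨rp, hrp, hrpe⟩ := hpb
      obtain ⟨rq, hrq, hrqe⟩ := hqb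
      subst hrpe; subst hrqe
      have h1 : rp ∈ W₁ := (hfB i rp).1 hp
      have h2 : rq ∈ W₁ := (hfB i rq).1 hq
      rw [hB₁meet c hc rp h1 rq h2 hrp hrq]
  -- final equivalence to Fin v
  have hcard : Fintype.card α = (u' + 1) * d + (u' * h + (h + ey)) := by
    simp [α, Fintype.card_prod]
    ring
  exact isIPBD_transfer ((Fintype.equivFinOfCardEq hcard)) W B hWcard hsz hmeet cover
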